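/- Let Q ∈ ℝ^{n×n} be symmetric and ν > λ_max(Q). Then Q̃ = νI − Q is symmetric positive definite, and for matrices F₁, F₂ ∈ ℝ^{n×c} with F₁ᵀF₁ = F₂ᵀF₂ = I, if Tr(F₂ᵀ Q̃ F₁ + F₂ᵀC) ≥ Tr(F₁ᵀ Q̃ F₁ + F₁ᵀC), then 2Tr(F₂ᵀC) − Tr(F₂ᵀQF₂) ≥ 2Tr(F₁ᵀC) − Tr(F₁ᵀQF₁). -/

import Mathlib

open Matrix BigOperators

lemma posDef_conj_unitary {m : Type*} [Fintype m] [DecidableEq m]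
    {D U : Matrix m m ℝ} (hD : D.PosDef) (hU : U ∈ Matrix.unitaryGroup m ℝ) :
    (U * D * star U).PosDef := by
  have hUU : U * star U = 1 := (Matrix.mem_unitaryGroup_iff).mp hU
  refine Matrix.posDef_iff_dotProduct_mulVec.mpr ⟨?_, ?_⟩
  · show (U * D * star U)ᴴ = _
    rw [Matrix.conjTranspose_mul, Matrix.conjTranspose_mul, hD.1.eq,
      Matrix.star_eq_conjTranspose, Matrix.conjTranspose_conjTranspose, ← Matrix.mul_assoc]
  · intro x hx
    have hy : star U *ᵥ x ≠ 0 := by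
      intro h
      apply hx
      have : U *ᵥ (star U *ᵥ x) = x := by
        rw [Matrix.mulVec_mulVec, hUU, Matrix.one_mulVec]
      rw [← this, h, Matrix.mulVec_zero]
    have key : star x ⬝ᵥ (U * D * star U) *ᵥ x
        = star (star U *ᵥ x) ⬝ᵥ D *ᵥ (star U *ᵥ x) := by
      rw [star_mulVec, Matrix.star_eq_conjTranspose, Matrix.conjTranspose_conjTranspose,
        ← Matrix.mulVec_mulVec, ← Matrix.mulVec_mulVec, Matrix.dotProduct_mulVec]
    rw [key]
    exact hD.dotProduct_mulVec_pos hy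

lemma posDef_smul_one_sub {n : ℕ} (Q : Matrix (Fin n) (Fin n) ℝ) (hQ : Q.IsHermitian)
    (ν : ℝ) (hν : ∀ i, hQ.eigenvalues i < ν) :
    (ν • (1 : Matrix (Fin n) (Fin n) ℝ) - Q).PosDef := by
  set U : Matrix (Fin n) (Fin n) ℝ := (hQ.eigenvectorUnitary : Matrix (Fin n) (Fin n) ℝ)
  have hU : U ∈ Matrix.unitaryGroup (Fin n) ℝ := hQ.eigenvectorUnitary.2
  have hUU : U * star U = 1 := (Matrix.mem_unitaryGroup_iff).mp hU
  have hspec : Q = U * diagonal (RCLike.ofReal ∘ hQ.eigenvalues) * star U := hQ.spectral_theorem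
  have h1 : ν • (1 : Matrix (Fin n) (Fin n) ℝ) - Q
      = U * (diagonal (fun i => ν - hQ.eigenvalues i)) * star U := by
    have hone : ν • (1 : Matrix (Fin n) (Fin n) ℝ) = U * (ν • 1) * star U := by
      rw [Matrix.mul_smul, Matrix.mul_one, Matrix.smul_mul, hUU]
    rw [hone]
    conv_lhs => rw [hspec]
    rw [← Matrix.sub_mul, ← Matrix.mul_sub]
    congr 1
    congr 1
    ext i j
    by_cases h : i = j <;>
      simp [h, Matrix.diagonal, Matrix.one_apply, Matrix.smul_apply]
  rw [h1]
  exact posDef_conj_unitary (Matrix.PosDef.diagonal fun i => sub_pos.mpr (hν i)) hU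

lemma trace_conj_nonneg {n c : ℕ} {M : Matrix (Fin n) (Fin n) ℝ} (hM : M.PosSemidef)
    (G : Matrix (Fin n) (Fin c) ℝ) : 0 ≤ Matrix.trace (Gᵀ * M * G) := by
  rw [Matrix.trace]
  apply Finset.sum_nonneg
  intro j _
  have : (Gᵀ * M * G) j j
      = star (fun i => G i j) ⬝ᵥ M *ᵥ (fun i => G i j) := by
    simp only [Matrix.mul_apply, Matrix.mulVec, dotProduct, Matrix.transpose_apply,
      Finset.sum_mul, Finset.mul_sum, Pi.star_apply, star_trivial]
    rw [Finset.sum_comm]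
    refine Finset.sum_congr rfl fun a _ => ?_
    refine Finset.sum_congr rfl fun b _ => ?_
    ring
  rw [Matrix.diag_apply, this]
  exact hM.dotProduct_mulVec_nonneg _

theorem power_iteration_monotone {n c : ℕ}
    (Q : Matrix (Fin n) (Fin n) ℝ) (hQ : Q.IsHermitian)
    (ν : ℝ) (hν : ∀ i, hQ.eigenvalues i < ν)
    (C : Matrix (Fin n) (Fin c) ℝ) :
    (ν • (1 : Matrix (Fin n) (Fin n) ℝ) - Q).PosDef ∧
      ∀ F₁ F₂ : Matrix (Fin n) (Fin c) ℝ,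
        F₁ᵀ * F₁ = 1 → F₂ᵀ * F₂ = 1 →
        Matrix.trace (F₁ᵀ * (ν • (1 : Matrix (Fin n) (Fin n) ℝ) - Q) * F₁ + F₁ᵀ * C) ≤
          Matrix.trace (F₂ᵀ * (ν • (1 : Matrix (Fin n) (Fin n) ℝ) - Q) * F₁ + F₂ᵀ * C) →
        2 * Matrix.trace (F₁ᵀ * C) - Matrix.trace (F₁ᵀ * Q * F₁) ≤
          2 * Matrix.trace (F₂ᵀ * C) - Matrix.trace (F₂ᵀ * Q * F₂) := by
  have hpd := posDef_smul_one_sub Q hQ ν hν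
  refine ⟨hpd, ?_⟩
  intro F₁ F₂ h₁ h₂ h
  set T : Matrix (Fin n) (Fin n) ℝ := ν • (1 : Matrix (Fin n) (Fin n) ℝ) - Q with hT
  have hTsymm : Tᵀ = T := hpd.1
  -- trace of FᵀTF = ν*c - trace FᵀQF
  have htr : ∀ F : Matrix (Fin n) (Fin c) ℝ, Fᵀ * F = 1 →
      Matrix.trace (Fᵀ * T * F) = ν * c - Matrix.trace (Fᵀ * Q * F) := by
    intro F hF
    have : Fᵀ * T * F = ν • (Fᵀ * F) - Fᵀ * Q * F := by
      rw [hT]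
      rw [Matrix.mul_sub, Matrix.sub_mul]
      congr 1
      rw [Matrix.mul_smul, Matrix.mul_one, Matrix.smul_mul]
    rw [this, hF, Matrix.trace_sub, Matrix.trace_smul]
    simp [Matrix.trace_one]
  -- key PSD inequality
  have key : 0 ≤ Matrix.trace ((F₂ - F₁)ᵀ * T * (F₂ - F₁)) :=
    trace_conj_nonneg hpd.posSemidef _
  have hcross : Matrix.trace (F₁ᵀ * T * F₂) = Matrix.trace (F₂ᵀ * T * F₁) := by
    rw [← Matrix.trace_transpose (F₁ᵀ * T * F₂)]
    rw [Matrix.transpose_mul, Matrix.transpose_mul, Matrix.transpose_transpose, hTsymm,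
      Matrix.mul_assoc]
  have hmat : ∀ A : Matrix (Fin n) (Fin n) ℝ, (F₂ - F₁)ᵀ * A * (F₂ - F₁)
      = F₂ᵀ * A * F₂ - F₂ᵀ * A * F₁ - F₁ᵀ * A * F₂ + F₁ᵀ * A * F₁ := by
    intro A
    rw [Matrix.transpose_sub, Matrix.sub_mul, Matrix.sub_mul, Matrix.mul_sub, Matrix.mul_sub]
    abel
  have hexp : Matrix.trace ((F₂ - F₁)ᵀ * T * (F₂ - F₁))
      = Matrix.trace (F₂ᵀ * T * F₂) + Matrix.trace (F₁ᵀ * T * F₁)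
        - 2 * Matrix.trace (F₂ᵀ * T * F₁) := by
    rw [hmat T, Matrix.trace_add, Matrix.trace_sub, Matrix.trace_sub, hcross]
    ring
  rw [Matrix.trace_add, Matrix.trace_add] at h
  have e₁ := htr F₁ h₁
  have e₂ := htr F₂ h₂
  rw [hexp] at key
  linarith
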